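/- arXiv:1811.03500 — 5 statements merged into one kernel-verified Lean document; each statement's English description precedes it below -/
import Mathlib

section
/- Let E be a real normed vector space, let W, X : E → E be vector fields that are differentiable at every point, and let a : E → ℝ be a function such that [W, X](x) = a(x) • X(x) for every x ∈ E. Then for every vector field V : E → E differentiable at every point, every differentiable function f : E → ℝ, and every x ∈ E, one has [W, V + f • X](x) = [W, V](x) + ((fderiv ℝ f x)(W x) + f(x)·a(x)) • X(x); in particular [W, V + f•X](x) − [W, V](x) is a scalar multiple of X(x). (This is the paper's proposition that the induced Lie derivative L̂_W on sections of TM/N, defined by L̂_W V̂ := [W, V] mod X, is well defined whenever W preserves the null structure, i.e. [W, X] mod X = 0.) -/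
/-- If `W` preserves the null structure defined by the vector field `X`, i.e.
`[W, X] = a • X` pointwise, then the induced Lie derivative on sections of `TM/N`
is well defined: replacing a representative `V` of a section by `V + f • X` changes
`[W, V]` only by a multiple of `X`, namely
`[W, V + f • X](x) = [W, V](x) + ((Df x)(W x) + f x * a x) • X x`. -/
theorem lie_derivative_mod_X_well_defined
    {E : Type*} [NormedAddCommGroup E] [NormedSpace ℝ E]
    (W X : E → E) (a : E → ℝ)
    (hW : ∀ x, DifferentiableAt ℝ W x)
    (hX : ∀ x, DifferentiableAt ℝ X x)
    (hWX : ∀ x, VectorField.lieBracket ℝ W X x = a x • X x) :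
    ∀ (V : E → E) (f : E → ℝ),
      (∀ x, DifferentiableAt ℝ V x) → (∀ x, DifferentiableAt ℝ f x) →
      ∀ x : E,
        VectorField.lieBracket ℝ W (fun y => V y + f y • X y) x
          = VectorField.lieBracket ℝ W V x
            + ((fderiv ℝ f x) (W x) + f x * a x) • X x ∧
        ∃ c : ℝ,
          VectorField.lieBracket ℝ W (fun y => V y + f y • X y) x
            - VectorField.lieBracket ℝ W V x = c • X x := by
  intro V f hV hf x
  have hfX : DifferentiableAt ℝ (fun y => f y • X y) x := (hf x).smul (hX x)
  have hb : fderiv ℝ X x (W x) - fderiv ℝ W x (X x) = a x • X x := hWX x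
  have key : VectorField.lieBracket ℝ W (fun y => V y + f y • X y) x
      = VectorField.lieBracket ℝ W V x + ((fderiv ℝ f x) (W x) + f x * a x) • X x := by
    simp only [VectorField.lieBracket]
    rw [fderiv_fun_add (hV x) hfX, fderiv_fun_smul (hf x) (hX x)]
    simp only [ContinuousLinearMap.add_apply, ContinuousLinearMap.smul_apply,
      ContinuousLinearMap.smulRight_apply, map_add, map_smul]
    have hb' : fderiv ℝ X x (W x) = fderiv ℝ W x (X x) + a x • X x := by
      rw [← hb]; abel
    rw [hb']
    module
  refine ⟨key, (fderiv ℝ f x) (W x) + f x * a x, ?_⟩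
  rw [key]; abel
end

section
/- Let E be a real normed vector space, let W, W', X : E → E be C² vector fields, and let a, b : E → ℝ be differentiable functions such that [W, X](x) = a(x) • X(x) and [W', X](x) = b(x) • X(x) for every x ∈ E. Then for every x ∈ E, [[W, W'], X](x) = ((fderiv ℝ b x)(W x) − (fderiv ℝ a x)(W' x)) • X(x); in particular [[W, W'], X](x) is a scalar multiple of X(x) for every x, so the set of vector fields preserving the null structure defined by X is closed under the Lie bracket. -/
open VectorField

lemma lieBracket_fun_smul {E : Type*} [NormedAddCommGroup E] [NormedSpace ℝ E]
    (V X : E → E) (f : E → ℝ) (x : E)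
    (hV : DifferentiableAt ℝ V x) (hX : DifferentiableAt ℝ X x)
    (hf : DifferentiableAt ℝ f x) :
    VectorField.lieBracket ℝ V (fun y => f y • X y) x
      = (fderiv ℝ f x (V x)) • X x + f x • VectorField.lieBracket ℝ V X x := by
  simp only [VectorField.lieBracket_eq]
  beta_reduce
  rw [fderiv_fun_smul hf hX]
  simp only [ContinuousLinearMap.add_apply, ContinuousLinearMap.smul_apply,
    ContinuousLinearMap.smulRight_apply, map_smul, smul_sub]
  module

/-- If `W` and `W'` both preserve the null structure defined by the vector field `X`,
i.e. `[W, X] = a • X` and `[W', X] = b • X` pointwise, then so does their Lie bracket: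
`[[W, W'], X](x) = ((Db x)(W x) - (Da x)(W' x)) • X x`, which is in particular a
scalar multiple of `X x` at every point. -/
theorem lieBracket_preserves_null_structure
    {E : Type*} [NormedAddCommGroup E] [NormedSpace ℝ E]
    (W W' X : E → E) (a b : E → ℝ)
    (hW : ContDiff ℝ 2 W) (hW' : ContDiff ℝ 2 W') (hX : ContDiff ℝ 2 X)
    (ha : ∀ x, DifferentiableAt ℝ a x) (hb : ∀ x, DifferentiableAt ℝ b x)
    (hWX : ∀ x, VectorField.lieBracket ℝ W X x = a x • X x)
    (hW'X : ∀ x, VectorField.lieBracket ℝ W' X x = b x • X x) :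
    ∀ x : E,
      VectorField.lieBracket ℝ (VectorField.lieBracket ℝ W W') X x
        = ((fderiv ℝ b x) (W x) - (fderiv ℝ a x) (W' x)) • X x ∧
      ∃ c : ℝ,
        VectorField.lieBracket ℝ (VectorField.lieBracket ℝ W W') X x = c • X x := by
  intro x
  have hWd : DifferentiableAt ℝ W x := (hW.differentiable (by norm_num)).differentiableAt
  have hW'd : DifferentiableAt ℝ W' x := (hW'.differentiable (by norm_num)).differentiableAt
  have hXd : DifferentiableAt ℝ X x := (hX.differentiable (by norm_num)).differentiableAt
  have leib := VectorField.leibniz_identity_lieBracket (𝕜 := ℝ)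
    (by simp) hW.contDiffAt hW'.contDiffAt hX.contDiffAt (x := x)
  have h1 : VectorField.lieBracket ℝ W (VectorField.lieBracket ℝ W' X) x
      = (fderiv ℝ b x (W x)) • X x + b x • (a x • X x) := by
    rw [show VectorField.lieBracket ℝ W' X = fun y => b y • X y from funext hW'X]
    rw [lieBracket_fun_smul W X b x hWd hXd (hb x), hWX x]
  have h2 : VectorField.lieBracket ℝ W' (VectorField.lieBracket ℝ W X) x
      = (fderiv ℝ a x (W' x)) • X x + a x • (b x • X x) := by
    rw [show VectorField.lieBracket ℝ W X = fun y => a y • X y from funext hWX]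
    rw [lieBracket_fun_smul W' X a x hW'd hXd (ha x), hW'X x]
  have key : VectorField.lieBracket ℝ (VectorField.lieBracket ℝ W W') X x
      = ((fderiv ℝ b x) (W x) - (fderiv ℝ a x) (W' x)) • X x := by
    have := leib
    rw [h1, h2] at this
    have : VectorField.lieBracket ℝ (VectorField.lieBracket ℝ W W') X x
        = (fderiv ℝ b x (W x)) • X x + b x • (a x • X x)
          - ((fderiv ℝ a x (W' x)) • X x + a x • (b x • X x)) := by
      rw [this]; abel
    rw [this]; module
  exact ⟨key, _, key⟩
end

section
/- Let R be a commutative ring, V an R-module, κ ∈ V, and f ∈ Module.Dual R V a linear functional with f(κ) = 1. Then for every element x of the exterior algebra ExteriorAlgebra R V, one has ι(κ)·x = 0 if and only if there exists y with x = ι(κ)·y; moreover, in that case one may take y = ι_f(x), i.e. x = ι(κ)·ι_f(x). (This is the paper's proposition that every null k-form α, i.e. one with κ ∧ α = 0, can be written as α = κ ∧ β; equivalently, the cohomology of the operation δ_κ(α) = κ ∧ α is trivial.) -/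
/-- If `f` is a linear functional with `f κ = 1`, then an element `x` of the exterior
algebra satisfies `ι κ * x = 0` (i.e. "κ ∧ x = 0", `x` is null) if and only if
`x = ι κ * y` for some `y`; moreover one can take `y = ι_f x`, the left contraction
of `x` by `f`. In other words, the cohomology of `δ_κ = κ ∧ ·` is trivial. -/
theorem null_form_factors_through_kappa
    {R : Type*} {V : Type*} [CommRing R] [AddCommGroup V] [Module R V]
    (κ : V) (f : Module.Dual R V) (hf : f κ = 1) :
    ∀ x : ExteriorAlgebra R V,
      (ExteriorAlgebra.ι R κ * x = 0 ↔ ∃ y, x = ExteriorAlgebra.ι R κ * y) ∧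
      (ExteriorAlgebra.ι R κ * x = 0 →
        x = ExteriorAlgebra.ι R κ * CliffordAlgebra.contractLeft f x) := by
  intro x
  have key : ExteriorAlgebra.ι R κ * x = 0 →
      x = ExteriorAlgebra.ι R κ * CliffordAlgebra.contractLeft f x := by
    intro h
    have := CliffordAlgebra.contractLeft_ι_mul (Q := (0 : QuadraticForm R V)) f κ x
    rw [h, map_zero, hf, one_smul] at this
    exact eq_of_sub_eq_zero this.symm
  refine ⟨⟨fun h => ⟨_, key h⟩, ?_⟩, key⟩
  rintro ⟨y, rfl⟩
  rw [← mul_assoc, ExteriorAlgebra.ι_sq_zero, zero_mul]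
end

section
/- Let n ≥ 3. An n×n real matrix M satisfies (i) Mᵀ J M = J, (ii) det M = 1, and (iii) M·e₀ = ℓ·e₀ for some real ℓ > 0, if and only if there exist ℓ > 0, a vector v = (v_i)_{2 ≤ i ≤ n−1} ∈ ℝ^{n−2}, and an (n−2)×(n−2) real matrix A with Aᵀ A = 1 and det A = 1, such that the entries of M are: M₀₀ = ℓ, M₀₁ = −(1/2)ℓ⁻¹‖v‖², M₀ⱼ = vⱼ for j ≥ 2; M₁₀ = 0, M₁₁ = ℓ⁻¹, M₁ⱼ = 0 for j ≥ 2; Mᵢ₀ = 0, Mᵢ₁ = −ℓ⁻¹(A v)ᵢ, Mᵢⱼ = Aᵢⱼ for i, j ≥ 2. (This identifies the paper's group H⁺_L of eq. (2.1), restricted to ℓ > 0 and A ∈ SO(n−2), as the isotropy group of the oriented null line ℝ_{>0}·e₀ inside the special pseudo-orthogonal group of the Minkowski form.) -/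
/-- The Gram matrix `J` of the light-cone Minkowski form on `ℝⁿ`:
`J 0 1 = J 1 0 = 1`, `J i i = 1` for `i ≥ 2`, all other entries `0`. -/
def lightconeGram (n : ℕ) [NeZero n] : Matrix (Fin n) (Fin n) ℝ :=
  Matrix.of fun i j =>
    if (i = 0 ∧ j = 1) ∨ (i = 1 ∧ j = 0) ∨ (i = j ∧ 2 ≤ (i : ℕ)) then 1 else 0

/-- The embedding of the index set `{2, …, n−1}` (modelled by `Fin (n−2)`) into `Fin n`. -/
def lightconeEmb (n : ℕ) (hn : 3 ≤ n) (j : Fin (n - 2)) : Fin n :=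
  ⟨(j : ℕ) + 2, by omega⟩

section
variable (n : ℕ) [NeZero n] (hn : 3 ≤ n)

private lemma lc_val_one (hn : 3 ≤ n) : ((1 : Fin n) : ℕ) = 1 := by
  rw [Fin.val_one']; exact Nat.mod_eq_of_lt (by omega)

private lemma lc_zero_ne_one (hn : 3 ≤ n) : (0 : Fin n) ≠ 1 := by
  intro h
  have := congrArg Fin.val h
  simp only [Fin.val_zero, lc_val_one n hn] at this
  omega

private lemma lc_emb_ne_zero (j : Fin (n-2)) : lightconeEmb n hn j ≠ 0 := by
  intro h
  have := congrArg Fin.val h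
  simp [lightconeEmb] at this

private lemma lc_emb_ne_one (j : Fin (n-2)) : lightconeEmb n hn j ≠ 1 := by
  intro h
  have := congrArg Fin.val h
  simp only [lightconeEmb, lc_val_one n hn] at this
  omega

private lemma lc_emb_inj {i j : Fin (n-2)} (h : lightconeEmb n hn i = lightconeEmb n hn j) : i = j := by
  have := congrArg Fin.val h
  simp [lightconeEmb] at this
  exact Fin.ext this

/-- The splitting equivalence. -/
private def lcSplit : Fin 2 ⊕ Fin (n - 2) ≃ Fin n :=
  finSumFinEquiv.trans (finCongr (by omega))

private lemma lcSplit_inl_zero : lcSplit n hn (Sum.inl 0) = 0 := by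
  apply Fin.ext
  simp [lcSplit]

private lemma lcSplit_inl_one : lcSplit n hn (Sum.inl 1) = 1 := by
  apply Fin.ext
  rw [lc_val_one n hn]
  simp [lcSplit]

private lemma lcSplit_inr (j : Fin (n-2)) : lcSplit n hn (Sum.inr j) = lightconeEmb n hn j := by
  apply Fin.ext
  simp [lcSplit, lightconeEmb]
  omega

private lemma lc_sum_split (f : Fin n → ℝ) :
    ∑ a, f a = f 0 + f 1 + ∑ j, f (lightconeEmb n hn j) := by
  rw [← Equiv.sum_comp (lcSplit n hn) f, Fintype.sum_sum_type, Fin.sum_univ_two,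
    lcSplit_inl_zero, lcSplit_inl_one]
  simp [lcSplit_inr]

private lemma lc_cases (i : Fin n) : i = 0 ∨ i = 1 ∨ ∃ k, i = lightconeEmb n hn k := by
  rcases Nat.lt_or_ge (i : ℕ) 2 with h | h
  · interval_cases hi : (i : ℕ)
    · exact Or.inl (Fin.ext (by simp [hi]))
    · exact Or.inr (Or.inl (Fin.ext (by rw [lc_val_one n hn]; exact hi)))
  · refine Or.inr (Or.inr ⟨⟨(i : ℕ) - 2, by omega⟩, Fin.ext ?_⟩)
    simp [lightconeEmb]
    omega

end

section
variable (n : ℕ) [NeZero n]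

private lemma lcJ_facts (hn : 3 ≤ n) (j : Fin (n-2)) : True := trivial

private lemma lcJ_00 (hn : 3 ≤ n) : lightconeGram n 0 0 = 0 := by
  simp [lightconeGram, lc_zero_ne_one n hn, (lc_zero_ne_one n hn).symm]

private lemma lcJ_01 (hn : 3 ≤ n) : lightconeGram n 0 1 = 1 := by
  simp [lightconeGram]

private lemma lcJ_10 (hn : 3 ≤ n) : lightconeGram n 1 0 = 1 := by
  simp [lightconeGram]

private lemma lcJ_11 (hn : 3 ≤ n) : lightconeGram n 1 1 = 0 := by
  simp [lightconeGram, lc_zero_ne_one n hn, (lc_zero_ne_one n hn).symm, lc_val_one n hn]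
  exact Nat.mod_le 1 n

private lemma lcJ_0e (hn : 3 ≤ n) (j : Fin (n-2)) : lightconeGram n 0 (lightconeEmb n hn j) = 0 := by
  simp [lightconeGram, lc_emb_ne_one n hn j, (lc_emb_ne_one n hn j).symm,
    lc_emb_ne_zero n hn j, (lc_emb_ne_zero n hn j).symm,
    lc_zero_ne_one n hn, (lc_zero_ne_one n hn).symm]

private lemma lcJ_1e (hn : 3 ≤ n) (j : Fin (n-2)) : lightconeGram n 1 (lightconeEmb n hn j) = 0 := by
  simp [lightconeGram, lc_emb_ne_one n hn j, (lc_emb_ne_one n hn j).symm,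
    lc_emb_ne_zero n hn j, (lc_emb_ne_zero n hn j).symm,
    lc_zero_ne_one n hn, (lc_zero_ne_one n hn).symm, lc_val_one n hn]

private lemma lcJ_e0 (hn : 3 ≤ n) (j : Fin (n-2)) : lightconeGram n (lightconeEmb n hn j) 0 = 0 := by
  simp [lightconeGram, lc_emb_ne_one n hn j, (lc_emb_ne_one n hn j).symm,
    lc_emb_ne_zero n hn j, (lc_emb_ne_zero n hn j).symm,
    lc_zero_ne_one n hn, (lc_zero_ne_one n hn).symm]

private lemma lcJ_e1 (hn : 3 ≤ n) (j : Fin (n-2)) : lightconeGram n (lightconeEmb n hn j) 1 = 0 := by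
  simp [lightconeGram, lc_emb_ne_one n hn j, (lc_emb_ne_one n hn j).symm,
    lc_emb_ne_zero n hn j, (lc_emb_ne_zero n hn j).symm,
    lc_zero_ne_one n hn, (lc_zero_ne_one n hn).symm]

private lemma lcJ_ee (hn : 3 ≤ n) (i j : Fin (n-2)) :
    lightconeGram n (lightconeEmb n hn i) (lightconeEmb n hn j) = if i = j then 1 else 0 := by
  have h2 : 2 ≤ ((lightconeEmb n hn i : Fin n) : ℕ) := by simp [lightconeEmb]
  by_cases h : i = j
  · subst h
    simp [lightconeGram, lc_emb_ne_one n hn i, lc_emb_ne_zero n hn i,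
      (lc_emb_ne_one n hn i).symm, (lc_emb_ne_zero n hn i).symm, h2]
  · have hne : lightconeEmb n hn i ≠ lightconeEmb n hn j := fun hc => h (lc_emb_inj n hn hc)
    simp [lightconeGram, lc_emb_ne_one n hn i, lc_emb_ne_zero n hn i, lc_emb_ne_one n hn j,
      lc_emb_ne_zero n hn j, (lc_emb_ne_one n hn j).symm, (lc_emb_ne_zero n hn j).symm, hne, h]

private lemma lc_col0 (hn : 3 ≤ n) (u : Fin n → ℝ) : ∑ b, u b * lightconeGram n b 0 = u 1 := by
  rw [lc_sum_split n hn]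
  simp [lcJ_00 n hn, lcJ_10 n hn, lcJ_e0 n hn]

private lemma lc_col1 (hn : 3 ≤ n) (u : Fin n → ℝ) : ∑ b, u b * lightconeGram n b 1 = u 0 := by
  rw [lc_sum_split n hn]
  simp [lcJ_01 n hn, lcJ_11 n hn, lcJ_e1 n hn]

private lemma lc_cole (hn : 3 ≤ n) (u : Fin n → ℝ) (k : Fin (n-2)) :
    ∑ b, u b * lightconeGram n b (lightconeEmb n hn k) = u (lightconeEmb n hn k) := by
  rw [lc_sum_split n hn]
  simp [lcJ_0e n hn, lcJ_1e n hn, lcJ_ee n hn]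

private lemma lc_expand (hn : 3 ≤ n) (M : Matrix (Fin n) (Fin n) ℝ) (i j : Fin n) :
    (M.transpose * lightconeGram n * M) i j =
      M 0 i * M 1 j + M 1 i * M 0 j +
        ∑ k, M (lightconeEmb n hn k) i * M (lightconeEmb n hn k) j := by
  simp only [Matrix.mul_apply, Matrix.transpose_apply]
  rw [lc_sum_split n hn (fun a => (∑ b, M b i * lightconeGram n b a) * M a j)]
  rw [lc_col0 n hn, lc_col1 n hn]
  have h3 : (∑ k, (∑ b, M b i * lightconeGram n b (lightconeEmb n hn k)) * M (lightconeEmb n hn k) j)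
      = ∑ k, M (lightconeEmb n hn k) i * M (lightconeEmb n hn k) j :=
    Finset.sum_congr rfl fun k _ => by rw [lc_cole n hn]
  rw [h3]
  ring

end

section
variable {m : ℕ}

private lemma lc_AtAv {A : Matrix (Fin m) (Fin m) ℝ} (hA : A.transpose * A = 1)
    (v : Fin m → ℝ) : A.transpose.mulVec (A.mulVec v) = v := by
  rw [Matrix.mulVec_mulVec, hA, Matrix.one_mulVec]

private lemma lc_norm_pres {A : Matrix (Fin m) (Fin m) ℝ} (hA : A.transpose * A = 1)
    (v : Fin m → ℝ) : ∑ k, (A.mulVec v k) ^ 2 = ∑ k, (v k) ^ 2 := by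
  have h : dotProduct (A.mulVec v) (A.mulVec v) = dotProduct v v := by
    rw [Matrix.dotProduct_mulVec, ← Matrix.mulVec_transpose, lc_AtAv hA]
  simpa [dotProduct, sq] using h

private lemma lc_At_apply {A : Matrix (Fin m) (Fin m) ℝ} (u : Fin m → ℝ) (j : Fin m) :
    A.transpose.mulVec u j = ∑ k, A k j * u k := by
  simp [Matrix.mulVec, dotProduct, Matrix.transpose_apply]

end

section
variable (n : ℕ) [NeZero n]

private lemma lc_det (hn : 3 ≤ n) (M : Matrix (Fin n) (Fin n) ℝ)
    (ℓ b : ℝ) (hℓ : ℓ ≠ 0) (v w : Fin (n-2) → ℝ) (A : Matrix (Fin (n-2)) (Fin (n-2)) ℝ)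
    (h00 : M 0 0 = ℓ) (h01 : M 0 1 = b) (h0j : ∀ j, M 0 (lightconeEmb n hn j) = v j)
    (h10 : M 1 0 = 0) (h11 : M 1 1 = ℓ⁻¹) (h1j : ∀ j, M 1 (lightconeEmb n hn j) = 0)
    (hi0 : ∀ i, M (lightconeEmb n hn i) 0 = 0) (hi1 : ∀ i, M (lightconeEmb n hn i) 1 = w i)
    (hij : ∀ i j, M (lightconeEmb n hn i) (lightconeEmb n hn j) = A i j) :
    M.det = A.det := by
  set B2 : Matrix (Fin 2) (Fin 2) ℝ := !![ℓ, b; 0, ℓ⁻¹] with hB2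
  set C2 : Matrix (Fin 2) (Fin (n-2)) ℝ := Matrix.of fun i j => if i = 0 then v j else 0 with hC2
  set D2 : Matrix (Fin (n-2)) (Fin 2) ℝ := Matrix.of fun i j => if j = 1 then w i else 0 with hD2
  have hsub : M.submatrix (lcSplit n hn) (lcSplit n hn) = Matrix.fromBlocks B2 C2 D2 A := by
    ext i j
    rcases i with i | i <;> rcases j with j | j
    · fin_cases i <;> fin_cases j <;>
        simp [Matrix.submatrix_apply, lcSplit_inl_zero, lcSplit_inl_one,
          h00, h01, h10, h11, hB2]
    · fin_cases i <;>
        simp [Matrix.submatrix_apply, lcSplit_inl_zero, lcSplit_inl_one, lcSplit_inr,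
          h0j, h1j, hC2]
    · fin_cases j <;>
        simp [Matrix.submatrix_apply, lcSplit_inl_zero, lcSplit_inl_one, lcSplit_inr,
          hi0, hi1, hD2, Fin.ext_iff]
    · simp [Matrix.submatrix_apply, lcSplit_inr, hij]
  have hdet : M.det = (Matrix.fromBlocks B2 C2 D2 A).det := by
    rw [← hsub, Matrix.det_submatrix_equiv_self]
  have hBinv : B2 * !![ℓ⁻¹, -b; 0, ℓ] = 1 := by
    ext i j
    fin_cases i <;> fin_cases j <;>
      simp [hB2, Matrix.mul_apply, Fin.sum_univ_two, hℓ, mul_comm, inv_mul_cancel₀] <;>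
      field_simp
  haveI : Invertible B2 := invertibleOfRightInverse _ _ hBinv
  have hInv : ⅟B2 = !![ℓ⁻¹, -b; 0, ℓ] := invOf_eq_right_inv hBinv
  rw [hdet, Matrix.det_fromBlocks₁₁]
  have hz : D2 * ⅟B2 * C2 = 0 := by
    rw [hInv]
    ext i j
    simp [hD2, hC2, Matrix.mul_apply, Fin.sum_univ_two]
  rw [hz, sub_zero, hB2, Matrix.det_fin_two_of]
  field_simp
  simp

end

/-- Identification of the group `H⁺_L` of eq. (2.1) (with `ℓ > 0`, `A ∈ SO(n−2)`):
an `n×n` real matrix `M` preserves the light-cone Minkowski form (`MᵀJM = J`), has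
`det M = 1`, and fixes the oriented null line `ℝ_{>0}·e₀` (`M e₀ = ℓ e₀`, `ℓ > 0`)
iff its entries are exactly those of eq. (2.1) for some `ℓ > 0`, `v ∈ ℝ^{n−2}` and
`A ∈ SO(n−2)`. -/
theorem isotropy_group_of_oriented_null_line
    (n : ℕ) [NeZero n] (hn : 3 ≤ n) (M : Matrix (Fin n) (Fin n) ℝ) :
    (M.transpose * lightconeGram n * M = lightconeGram n ∧ M.det = 1 ∧
        ∃ ℓ : ℝ, 0 < ℓ ∧ M.mulVec (Pi.single 0 1 : Fin n → ℝ) = ℓ • (Pi.single 0 1 : Fin n → ℝ))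
      ↔
    ∃ (ℓ : ℝ) (v : Fin (n - 2) → ℝ) (A : Matrix (Fin (n - 2)) (Fin (n - 2)) ℝ),
      0 < ℓ ∧ A.transpose * A = 1 ∧ A.det = 1 ∧
      M 0 0 = ℓ ∧
      M 0 1 = -(1/2) * ℓ⁻¹ * ∑ k, v k ^ 2 ∧
      (∀ j, M 0 (lightconeEmb n hn j) = v j) ∧
      M 1 0 = 0 ∧
      M 1 1 = ℓ⁻¹ ∧
      (∀ j, M 1 (lightconeEmb n hn j) = 0) ∧
      (∀ i, M (lightconeEmb n hn i) 0 = 0) ∧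
      (∀ i, M (lightconeEmb n hn i) 1 = -ℓ⁻¹ * A.mulVec v i) ∧
      (∀ i j, M (lightconeEmb n hn i) (lightconeEmb n hn j) = A i j) := by
  constructor
  · rintro ⟨hM, hdet, ℓ, hℓ, he⟩
    have key : ∀ i j, M 0 i * M 1 j + M 1 i * M 0 j +
        ∑ k, M (lightconeEmb n hn k) i * M (lightconeEmb n hn k) j = lightconeGram n i j := by
      intro i j
      rw [← lc_expand n hn M i j, hM]
    rw [Matrix.mulVec_single] at he
    have hcol : ∀ i, M i 0 = ℓ * (Pi.single 0 1 : Fin n → ℝ) i := by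
      intro i
      have h := congrFun he i
      simpa using h
    have h00 : M 0 0 = ℓ := by simpa using hcol 0
    have h10 : M 1 0 = 0 := by
      simpa [Pi.single_eq_of_ne (Ne.symm (lc_zero_ne_one n hn))] using hcol 1
    have he0 : ∀ k, M (lightconeEmb n hn k) 0 = 0 := fun k => by
      simpa [Pi.single_eq_of_ne (lc_emb_ne_zero n hn k)] using hcol (lightconeEmb n hn k)
    have h11 : M 1 1 = ℓ⁻¹ := by
      have h := key 0 1
      rw [lcJ_01 n hn] at h
      simp [h00, h10, he0] at h
      field_simp
      linear_combination h
    have h1e : ∀ j, M 1 (lightconeEmb n hn j) = 0 := by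
      intro j
      have h := key 0 (lightconeEmb n hn j)
      rw [lcJ_0e n hn] at h
      simp [h00, h10, he0, hℓ.ne'] at h
      exact h
    set v : Fin (n-2) → ℝ := fun j => M 0 (lightconeEmb n hn j) with hv
    set A : Matrix (Fin (n-2)) (Fin (n-2)) ℝ :=
      Matrix.of fun i j => M (lightconeEmb n hn i) (lightconeEmb n hn j) with hA
    set w : Fin (n-2) → ℝ := fun i => M (lightconeEmb n hn i) 1 with hw
    have hAtA : A.transpose * A = 1 := by
      ext i j
      have h := key (lightconeEmb n hn i) (lightconeEmb n hn j)
      rw [lcJ_ee n hn] at h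
      simp [h1e] at h
      simp [Matrix.mul_apply, Matrix.transpose_apply, Matrix.one_apply, hA]
      exact h
    have hwv : A.transpose.mulVec w = fun j => -(ℓ⁻¹ * v j) := by
      funext j
      rw [lc_At_apply]
      have h := key 1 (lightconeEmb n hn j)
      rw [lcJ_1e n hn] at h
      simp [h1e, h11] at h
      have hc : ∑ k, A k j * w k =
          ∑ k, M (lightconeEmb n hn k) 1 * M (lightconeEmb n hn k) (lightconeEmb n hn j) :=
        Finset.sum_congr rfl fun k _ => mul_comm _ _
      rw [hc]
      linarith
    have hi1v : ∀ i, M (lightconeEmb n hn i) 1 = -ℓ⁻¹ * A.mulVec v i := by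
      have hAAt : A * A.transpose = 1 := mul_eq_one_comm.mp hAtA
      have hsmul : (fun j => -(ℓ⁻¹ * v j)) = (-ℓ⁻¹) • v := by
        funext j; rw [Pi.smul_apply, smul_eq_mul]; ring
      have hw2 : w = (-ℓ⁻¹) • A.mulVec v := by
        calc w = (A * A.transpose).mulVec w := by rw [hAAt, Matrix.one_mulVec]
        _ = A.mulVec (A.transpose.mulVec w) := (Matrix.mulVec_mulVec _ _ _).symm
        _ = A.mulVec ((-ℓ⁻¹) • v) := by rw [hwv, hsmul]
        _ = (-ℓ⁻¹) • A.mulVec v := Matrix.mulVec_smul _ _ _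
      intro i
      have := congrFun hw2 i
      simpa [smul_eq_mul] using this
    have hsum : ∑ k, M (lightconeEmb n hn k) 1 * M (lightconeEmb n hn k) 1 =
        ℓ⁻¹ * ℓ⁻¹ * ∑ k, v k ^ 2 := by
      calc ∑ k, M (lightconeEmb n hn k) 1 * M (lightconeEmb n hn k) 1
          = ∑ k, ℓ⁻¹ * ℓ⁻¹ * (A.mulVec v k) ^ 2 :=
            Finset.sum_congr rfl fun k _ => by rw [hi1v k]; ring
        _ = ℓ⁻¹ * ℓ⁻¹ * ∑ k, (A.mulVec v k) ^ 2 := (Finset.mul_sum _ _ _).symm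
        _ = ℓ⁻¹ * ℓ⁻¹ * ∑ k, v k ^ 2 := by rw [lc_norm_pres hAtA]
    have h01v : M 0 1 = -(1/2) * ℓ⁻¹ * ∑ k, v k ^ 2 := by
      have h := key 1 1
      rw [lcJ_11 n hn] at h
      rw [h11, hsum] at h
      have hinv : ℓ * ℓ⁻¹ = 1 := mul_inv_cancel₀ hℓ.ne'
      linear_combination (ℓ/2) * h + (-(M 0 1) - (ℓ⁻¹/2) * ∑ k, v k ^ 2) * hinv
    have hA1 : A.det = 1 := by
      rw [← lc_det n hn M ℓ (M 0 1) hℓ.ne' v w A h00 rfl (fun j => rfl) h10 h11 h1e he0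
        (fun i => rfl) (fun i j => rfl)]
      exact hdet
    exact ⟨ℓ, v, A, hℓ, hAtA, hA1, h00, h01v, fun j => rfl, h10, h11, h1e, he0, hi1v,
      fun i j => rfl⟩
  · rintro ⟨ℓ, v, A, hℓ, hAtA, hA1, h00, h01, h0j, h10, h11, h1j, hi0, hi1, hij⟩
    have hAv : ∀ j, ∑ k, A k j * A.mulVec v k = v j := by
      intro j
      rw [← lc_At_apply, lc_AtAv hAtA]
    have hsum : ∑ k, M (lightconeEmb n hn k) 1 * M (lightconeEmb n hn k) 1 =
        ℓ⁻¹ * ℓ⁻¹ * ∑ k, v k ^ 2 := by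
      calc ∑ k, M (lightconeEmb n hn k) 1 * M (lightconeEmb n hn k) 1
          = ∑ k, ℓ⁻¹ * ℓ⁻¹ * (A.mulVec v k) ^ 2 :=
            Finset.sum_congr rfl fun k _ => by rw [hi1 k]; ring
        _ = ℓ⁻¹ * ℓ⁻¹ * ∑ k, (A.mulVec v k) ^ 2 := (Finset.mul_sum _ _ _).symm
        _ = ℓ⁻¹ * ℓ⁻¹ * ∑ k, v k ^ 2 := by rw [lc_norm_pres hAtA]
    refine ⟨?_, ?_, ℓ, hℓ, ?_⟩
    · ext i j
      rw [lc_expand n hn]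
      rcases lc_cases n hn i with hi | hi | ⟨ki, hi⟩ <;>
        rcases lc_cases n hn j with hj | hj | ⟨kj, hj⟩ <;> subst hi <;> subst hj
      · rw [lcJ_00 n hn]; simp [h00, h10, hi0]
      · rw [lcJ_01 n hn]; simp [h00, h10, h11, hi0, mul_inv_cancel₀ hℓ.ne']
      · rw [lcJ_0e n hn]; simp [h00, h10, h1j, hi0]
      · rw [lcJ_10 n hn]; simp [h00, h10, h11, hi0, inv_mul_cancel₀ hℓ.ne']
      · rw [lcJ_11 n hn]
        rw [hsum, h01, h11]
        ring
      · rw [lcJ_1e n hn]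
        rw [h1j, h11, h0j]
        have h3 : ∑ k, M (lightconeEmb n hn k) 1 * M (lightconeEmb n hn k) (lightconeEmb n hn kj)
            = -ℓ⁻¹ * v kj := by
          calc ∑ k, M (lightconeEmb n hn k) 1 * M (lightconeEmb n hn k) (lightconeEmb n hn kj)
              = ∑ k, -ℓ⁻¹ * (A k kj * A.mulVec v k) :=
                Finset.sum_congr rfl fun k _ => by rw [hi1 k, hij k kj]; ring
            _ = -ℓ⁻¹ * ∑ k, A k kj * A.mulVec v k := (Finset.mul_sum _ _ _).symm
            _ = -ℓ⁻¹ * v kj := by rw [hAv kj]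
        rw [h3]
        ring
      · rw [lcJ_e0 n hn]; simp [h00, h10, h1j, hi0, hij]
      · rw [lcJ_e1 n hn]
        rw [h1j, h11, h0j]
        have h3 : ∑ k, M (lightconeEmb n hn k) (lightconeEmb n hn ki) * M (lightconeEmb n hn k) 1
            = -ℓ⁻¹ * v ki := by
          calc ∑ k, M (lightconeEmb n hn k) (lightconeEmb n hn ki) * M (lightconeEmb n hn k) 1
              = ∑ k, -ℓ⁻¹ * (A k ki * A.mulVec v k) :=
                Finset.sum_congr rfl fun k _ => by rw [hi1 k, hij k ki]; ring
            _ = -ℓ⁻¹ * ∑ k, A k ki * A.mulVec v k := (Finset.mul_sum _ _ _).symm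
            _ = -ℓ⁻¹ * v ki := by rw [hAv ki]
        rw [h3]
        ring
      · rw [lcJ_ee n hn]
        simp only [h1j, hij, mul_zero, zero_mul, zero_add, add_zero]
        have h := congrFun (congrFun hAtA ki) kj
        simpa [Matrix.mul_apply, Matrix.transpose_apply, Matrix.one_apply] using h
    · rw [lc_det n hn M ℓ (M 0 1) hℓ.ne' v (fun i => -ℓ⁻¹ * A.mulVec v i) A h00 rfl h0j h10
        h11 h1j hi0 hi1 hij]
      exact hA1
    · rw [Matrix.mulVec_single]
      funext i
      rcases lc_cases n hn i with hi | hi | ⟨k, hi⟩ <;> subst hi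
      · simp [h00, Pi.single_eq_same]
      · simp [h10, Pi.single_eq_of_ne (Ne.symm (lc_zero_ne_one n hn))]
      · simp [hi0, Pi.single_eq_of_ne (lc_emb_ne_zero n hn k)]
end

section
/- Let n ≥ 2 and let W : ℝⁿ → ℝⁿ be a vector field differentiable at every point. Suppose (i) for every x ∈ ℝⁿ, (fderiv ℝ W x)(e₀) is a scalar multiple of e₀ (i.e. [W, ∂_u] is pointwise proportional to ∂_u), and (ii) for every x ∈ ℝⁿ there exists c ∈ ℝ such that fderiv ℝ (fun y => W y 1) x = c • π₁, where π₁ : ℝⁿ → ℝ is the linear functional y ↦ y 1. Then the v-component of W depends only on v, i.e. W(x) 1 = W(x') 1 whenever x 1 = x' 1, and for every i ≠ 0 the i-th component of W is independent of u, i.e. W(x + t•e₀) i = W(x) i for all x, t. (This is the paper's characterization (5.2) of vector fields preserving both X = ∂_u and κ = h dv up to rescaling: W = W^u(u,v,y)∂_u + W^v(v)∂_v + W^I(v,y)∂_I; note that for nowhere-vanishing h, the condition L_W(h dv) = b·h dv is equivalent to hypothesis (ii).) -/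
/-- Characterization (5.2) of vector fields preserving both `X = ∂_u` and the null
structure of `κ = h dv`: if `W` is differentiable everywhere, `(DW x)(∂_u)` is
pointwise proportional to `∂_u` (i.e. `[W, ∂_u] ∥ ∂_u`), and the differential of the
component `W¹` is pointwise proportional to `dv` (the projection `π₁`), then
`W = W^u(u,v,y)∂_u + W^v(v)∂_v + W^I(v,y)∂_I`: the `v`-component of `W` depends only
on `v`, and every component `W i`, `i ≠ 0`, is independent of `u`. -/
theorem preserves_X_and_kappa_vector_fields
    (n : ℕ) [NeZero n] (hn : 2 ≤ n) (W : (Fin n → ℝ) → (Fin n → ℝ))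
    (hW : ∀ x, DifferentiableAt ℝ W x)
    (h1 : ∀ x : Fin n → ℝ, ∃ a : ℝ,
        (fderiv ℝ W x) (Pi.single 0 1 : Fin n → ℝ)
          = a • (Pi.single 0 1 : Fin n → ℝ))
    (h2 : ∀ x : Fin n → ℝ, ∃ c : ℝ,
        fderiv ℝ (fun y => W y 1) x
          = c • (ContinuousLinearMap.proj 1 : (Fin n → ℝ) →L[ℝ] ℝ)) :
    (∀ x x' : Fin n → ℝ, x 1 = x' 1 → W x 1 = W x' 1) ∧
    (∀ i : Fin n, i ≠ 0 → ∀ (x : Fin n → ℝ) (t : ℝ),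
        W (x + t • (Pi.single 0 1 : Fin n → ℝ)) i = W x i) := by
  have hW1 : ∀ x, DifferentiableAt ℝ (fun y => W y 1) x := fun x => by
    have := (hW x).hasFDerivAt
    exact ((ContinuousLinearMap.proj 1 : (Fin n → ℝ) →L[ℝ] ℝ).hasFDerivAt.comp x
      this).differentiableAt
  constructor
  · intro x x' hxx
    set d := x' - x with hd
    have key : ∀ t : ℝ, HasDerivAt (fun t : ℝ => W (x + t • d) 1) 0 t := by
      intro t
      have hline : HasDerivAt (fun t : ℝ => x + t • d) d t := by
        simpa using ((hasDerivAt_id t).smul_const d).const_add x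
      obtain ⟨c, hc⟩ := h2 (x + t • d)
      have h := (hW1 (x + t • d)).hasFDerivAt.comp_hasDerivAt t hline
      rw [hc] at h
      convert h using 1
      exacts [rfl, rfl, rfl, by simp [hd, hxx]]
    have hcon : (fun t : ℝ => W (x + t • d) 1) 0 = (fun t : ℝ => W (x + t • d) 1) 1 :=
      is_const_of_deriv_eq_zero (fun t => (key t).differentiableAt)
        (fun t => (key t).deriv) 0 1
    simpa [hd] using hcon
  · intro i hi x t
    have key : ∀ s : ℝ, HasDerivAt
        (fun s : ℝ => W (x + s • (Pi.single 0 1 : Fin n → ℝ)) i) 0 s := by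
      intro s
      set e : Fin n → ℝ := Pi.single 0 1 with he
      have hline : HasDerivAt (fun s : ℝ => x + s • e) e s := by
        simpa using ((hasDerivAt_id s).smul_const e).const_add x
      have h := (hW (x + s • e)).hasFDerivAt.comp_hasDerivAt s hline
      obtain ⟨a, ha⟩ := h1 (x + s • e)
      have hi2 := (hasDerivAt_pi.1 h) i
      rw [ha] at hi2
      simpa [he, Pi.single_eq_of_ne hi] using hi2
    have hcon : (fun s : ℝ => W (x + s • (Pi.single 0 1 : Fin n → ℝ)) i) t
        = (fun s : ℝ => W (x + s • (Pi.single 0 1 : Fin n → ℝ)) i) 0 :=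
      is_const_of_deriv_eq_zero (fun s => (key s).differentiableAt)
        (fun s => (key s).deriv) t 0
    simpa using hcon
end
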